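/- Let K be a valued field containing ℚ_p with continuous inclusion ℚ_p ↪ K, and let f : ℚ_p → K be continuous. Then f satisfies Δ_h^{n+1} f(x) = 0 for all x, h ∈ ℚ_p if and only if there exist constants a_0, ..., a_n ∈ K such that f(x) = a_0 + a_1 x + ⋯ + a_n x^n for all x ∈ ℚ_p. -/

import Mathlib

open Polynomial Finset

/-- The difference operator `Δ_h f (x) = f (x + h) - f x`. -/
def dd {X Y : Type*} [Add X] [Sub Y] (h : X) (f : X → Y) : X → Y :=
  fun x => f (x + h) - f x

/-- Iterated difference `Δ_{h₁}(Δ_{h₂ ⋯ hₛ} f)` for a list of steps. -/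
def ddIter {X Y : Type*} [Add X] [Sub Y] (hs : List X) (f : X → Y) : X → Y :=
  hs.foldr dd f

lemma withbot_le_of_lt_succ {x : WithBot ℕ} {n : ℕ} (h : x < ((n+1 : ℕ) : WithBot ℕ)) :
    x ≤ (n : ℕ) := by
  cases x with
  | bot => exact bot_le
  | coe m =>
    rw [Nat.cast_withBot] at h ⊢
    exact WithBot.coe_le_coe.mpr (Nat.lt_succ_iff.mp (WithBot.coe_lt_coe.mp h))

lemma taylor_sub_degree_lt {K : Type*} [Field K] (P : K[X]) (hP : P ≠ 0) (r : K) :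
    (Polynomial.taylor r P - P).degree < P.degree := by
  by_cases hT : taylor r P = P
  · rw [hT, sub_self, degree_zero]
    exact bot_lt_iff_ne_bot.mpr (degree_eq_bot.not.mpr hP)
  · have hT0 : taylor r P ≠ 0 := by
      intro h0
      apply hP
      have := congrArg (taylor (-r)) h0
      rwa [taylor_taylor, neg_add_cancel, taylor_zero, map_zero] at this
    have hdeg : (taylor r P).degree = P.degree := by
      rw [degree_eq_natDegree hT0, degree_eq_natDegree hP, natDegree_taylor]
    have hlc : (taylor r P).leadingCoeff = P.leadingCoeff := by
      rw [taylor_apply, leadingCoeff_comp (by simp [natDegree_X_add_C]),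
        (monic_X_add_C r).leadingCoeff, one_pow, mul_one]
    have := degree_sub_lt hdeg hT0 hlc
    rwa [hdeg] at this

lemma aux_rev {p : ℕ} [Fact p.Prime] {K : Type*} [NormedField K] (ι : ℚ_[p] →+* K) :
    ∀ (d : ℕ) (P : K[X]), P.degree < (d : ℕ) → ∀ h₀ : ℚ_[p],
      (fwdDiff h₀) ^[d] (fun x : ℚ_[p] => P.eval (ι x)) = fun _ => 0 := by
  intro d
  induction d with
  | zero =>
    intro P hP h₀
    have : P = 0 := by
      rw [← degree_eq_bot]
      exact Nat.WithBot.lt_zero_iff.mp (by exact_mod_cast hP)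
    simp [this]
  | succ d IH =>
    intro P hP h₀
    by_cases hP0 : P = 0
    · subst hP0
      simp only [eval_zero]
      rw [Function.iterate_fixed (by simp [fwdDiff])]
    · rw [Function.iterate_succ_apply]
      have key : fwdDiff h₀ (fun x : ℚ_[p] => P.eval (ι x))
          = fun x => (Polynomial.taylor (ι h₀) P - P).eval (ι x) := by
        funext x
        simp only [fwdDiff, eval_sub, taylor_eval, map_add]
      rw [key]
      apply IH
      calc (Polynomial.taylor (ι h₀) P - P).degree < P.degree := taylor_sub_degree_lt P hP0 _
        _ ≤ (d : ℕ) := withbot_le_of_lt_succ hP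

section Forward
variable {p : ℕ} [Fact p.Prime] {K : Type*} [NormedField K]

lemma iter_zero_fun {M G : Type*} [AddCommMonoid M] [AddCommGroup G] (h : M) (m : ℕ) :
    (fwdDiff h)^[m] (fun _ : M => (0 : G)) = fun _ => 0 :=
  Function.iterate_fixed (by simp [fwdDiff]) m

lemma high_diff_zero (f : ℚ_[p] → K) (n : ℕ)
    (H : ∀ x h : ℚ_[p], (fwdDiff h)^[n + 1] f x = 0) (h : ℚ_[p]) {j : ℕ} (hj : n + 1 ≤ j) :
    (fwdDiff h)^[j] f = fun _ => 0 := by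
  obtain ⟨m, rfl⟩ := Nat.exists_eq_add_of_le hj
  rw [add_comm, Function.iterate_add_apply,
    show (fwdDiff h)^[n+1] f = fun _ => (0:K) from funext fun x => H x h, iter_zero_fun]

lemma newton (f : ℚ_[p] → K) (n : ℕ)
    (H : ∀ x h : ℚ_[p], (fwdDiff h)^[n + 1] f x = 0) (x0 h : ℚ_[p]) (k : ℕ) :
    f (x0 + k • h) = ∑ j ∈ Finset.range (n + 1),
      (k.choose j : K) * ((fwdDiff h)^[j] f x0) := by
  rw [shift_eq_sum_fwdDiff_iter h f k x0]
  have e1 : ∑ j ∈ Finset.range (k + 1), k.choose j • (fwdDiff h)^[j] f x0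
      = ∑ j ∈ Finset.range (max k n + 1), k.choose j • (fwdDiff h)^[j] f x0 := by
    apply Finset.sum_subset (Finset.range_subset_range.mpr (by omega))
    intro j _ hj
    rw [Finset.mem_range, not_lt] at hj
    rw [Nat.choose_eq_zero_of_lt (by omega), zero_smul]
  have e2 : ∑ j ∈ Finset.range (n + 1), (k.choose j : K) * ((fwdDiff h)^[j] f x0)
      = ∑ j ∈ Finset.range (max k n + 1), (k.choose j : K) * ((fwdDiff h)^[j] f x0) := by
    apply Finset.sum_subset (Finset.range_subset_range.mpr (by omega))
    intro j _ hj
    rw [Finset.mem_range, not_lt] at hj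
    rw [high_diff_zero f n H h (by omega), mul_zero]
  rw [e1, e2]
  exact Finset.sum_congr rfl fun j _ => by rw [nsmul_eq_mul]

lemma polyOnProg (ι : ℚ_[p] →+* K) (f : ℚ_[p] → K) (n : ℕ)
    (H : ∀ x h : ℚ_[p], (fwdDiff h)^[n + 1] f x = 0) (x0 h : ℚ_[p]) :
    ∃ Q : K[X], Q.degree < ((n + 1 : ℕ) : WithBot ℕ) ∧
      ∀ k : ℕ, f (x0 + k • h) = Q.eval ((k : K)) := by
  haveI : CharZero K := (RingHom.charZero_iff ι.injective).mp inferInstance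
  refine ⟨∑ j ∈ Finset.range (n + 1),
    Polynomial.C (((fwdDiff h)^[j] f x0) * ((j.factorial : K))⁻¹) * descPochhammer K j, ?_, ?_⟩
  · apply lt_of_le_of_lt (Polynomial.degree_sum_le _ _)
    rw [Finset.sup_lt_iff (by exact_mod_cast WithBot.bot_lt_coe _)]
    intro j hj
    rw [Finset.mem_range] at hj
    have h1 : (Polynomial.C (((fwdDiff h)^[j] f x0) * ((j.factorial : K))⁻¹)
        * descPochhammer K j).degree ≤ (descPochhammer K j).degree := by
      refine le_trans (Polynomial.degree_mul_le _ _) ?_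
      simpa using add_le_add_left
        (Polynomial.degree_C_le (a := ((fwdDiff h)^[j] f x0) * ((j.factorial : K))⁻¹))
        (descPochhammer K j).degree
    refine lt_of_le_of_lt (h1.trans Polynomial.degree_le_natDegree) ?_
    rw [descPochhammer_natDegree, Nat.cast_withBot, Nat.cast_withBot]
    exact_mod_cast hj
  · intro k
    rw [newton f n H x0 h k, Polynomial.eval_finset_sum]
    refine Finset.sum_congr rfl fun j _ => ?_
    rw [Polynomial.eval_mul, Polynomial.eval_C, descPochhammer_eval_eq_descFactorial,
      Nat.descFactorial_eq_factorial_mul_choose, Nat.cast_mul]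
    have : (j.factorial : K) ≠ 0 := Nat.cast_ne_zero.mpr j.factorial_ne_zero
    field_simp

end Forward

lemma natDegree_le_of_degree_lt_succ {K : Type*} [Field K] {Q : K[X]} {n : ℕ}
    (h : Q.degree < ((n + 1 : ℕ) : WithBot ℕ)) : Q.natDegree ≤ n :=
  Polynomial.natDegree_le_iff_degree_le.mpr (withbot_le_of_lt_succ h)

lemma forward_poly {p : ℕ} [Fact p.Prime] {K : Type*} [NormedField K]
    (ι : ℚ_[p] →+* K) (f : ℚ_[p] → K) (n : ℕ)
    (H : ∀ x h : ℚ_[p], (fwdDiff h)^[n + 1] f x = 0) :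
    ∃ P : K[X], P.degree < ((n + 1 : ℕ) : WithBot ℕ) ∧
      ∀ q : ℚ, f ((q : ℚ_[p])) = P.eval (ι ((q : ℚ_[p]))) := by
  classical
  haveI : CharZero K := (RingHom.charZero_iff ι.injective).mp inferInstance
  obtain ⟨P, hPdeg, hP⟩ := polyOnProg ι f n H 0 1
  have hPnat : ∀ k : ℕ, f ((k : ℚ_[p])) = P.eval ((k : K)) := by
    intro k
    have := hP k
    rwa [zero_add, nsmul_eq_mul, mul_one] at this
  refine ⟨P, hPdeg, ?_⟩
  intro q
  set b : ℕ := q.den with hbdef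
  have hbpos : 0 < b := q.pos
  have hbQp : ((b : ℚ_[p])) ≠ 0 := Nat.cast_ne_zero.mpr hbpos.ne'
  have hbK : ((b : K)) ≠ 0 := Nat.cast_ne_zero.mpr hbpos.ne'
  set h : ℚ_[p] := ((b : ℚ_[p]))⁻¹ with hhdef
  set c : ℤ := min q.num 0 with hcdef
  have hc0 : c ≤ 0 := min_le_right _ _
  have hca : c ≤ q.num := min_le_left _ _
  obtain ⟨Q, hQdeg, hQ⟩ := polyOnProg ι f n H ((c : ℚ_[p]) * h) h
  have hprog : ∀ k : ℕ, (c : ℚ_[p]) * h + k • h = ((c + (k : ℤ) : ℤ) : ℚ_[p]) * h := by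
    intro k; push_cast; rw [nsmul_eq_mul]; ring
  set R : K[X] := Q.comp (Polynomial.C ((b : K)) * Polynomial.X - Polynomial.C ((c : K)))
    with hRdef
  have hReval : ∀ t : K, R.eval t = Q.eval ((b : K) * t - (c : K)) := by
    intro t
    simp [hRdef, Polynomial.eval_comp]
  have key : ∀ j : ℕ, R.eval ((j : K)) = f ((j : ℚ_[p])) := by
    intro j
    have hnn : (0 : ℤ) ≤ (j : ℤ) * (b : ℤ) - c := by
      have : (0 : ℤ) ≤ (j : ℤ) * (b : ℤ) := by positivity
      omega
    set k : ℕ := ((j : ℤ) * (b : ℤ) - c).toNat with hkdef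
    have hk : (k : ℤ) = (j : ℤ) * (b : ℤ) - c := Int.toNat_of_nonneg hnn
    have h1 := hQ k
    rw [hprog k] at h1
    have h2 : (c + (k : ℤ)) = (j : ℤ) * (b : ℤ) := by omega
    rw [h2] at h1
    have h3 : (((j : ℤ) * (b : ℤ) : ℤ) : ℚ_[p]) * h = ((j : ℚ_[p])) := by
      rw [hhdef]; push_cast; field_simp
    rw [h3] at h1
    rw [hReval, h1]
    congr 1
    have hkK : ((k : ℕ) : K) = (((j : ℤ) * (b : ℤ) - c : ℤ) : K) := by
      rw [← hk]; push_cast; ring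
    rw [hkK]; push_cast; ring
  have hRP : R = P := by
    set s : Finset K := (Finset.range (n + 1)).image (fun j : ℕ => ((j : K))) with hsdef
    have hcard : s.card = n + 1 := by
      rw [hsdef, Finset.card_image_of_injective _ Nat.cast_injective, Finset.card_range]
    have hdegR : R.degree < (s.card : WithBot ℕ) := by
      rw [hcard]
      refine lt_of_le_of_lt Polynomial.degree_le_natDegree ?_
      have : R.natDegree ≤ n := by
        rw [hRdef, Polynomial.natDegree_comp]
        have hlin : (Polynomial.C ((b : K)) * Polynomial.X - Polynomial.C ((c : K))).natDegree
            = 1 := by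
          rw [Polynomial.natDegree_sub_C, Polynomial.natDegree_C_mul_X _ hbK]
        rw [hlin, mul_one]
        exact natDegree_le_of_degree_lt_succ hQdeg
      rw [Nat.cast_withBot, Nat.cast_withBot]
      exact_mod_cast Nat.lt_succ_of_le this
    have hdegP : P.degree < (s.card : WithBot ℕ) := by rw [hcard]; exact hPdeg
    apply Polynomial.eq_of_degrees_lt_of_eval_finset_eq s hdegR hdegP
    intro x hx
    rw [hsdef, Finset.mem_image] at hx
    obtain ⟨j, _, rfl⟩ := hx
    rw [key j, hPnat j]
  -- now evaluate at q
  have hnn0 : (0 : ℤ) ≤ q.num - c := by omega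
  set k0 : ℕ := (q.num - c).toNat with hk0def
  have hk0 : ((k0 : ℕ) : ℤ) = q.num - c := Int.toNat_of_nonneg hnn0
  have h1 := hQ k0
  rw [hprog k0] at h1
  have h2 : (c + (k0 : ℤ)) = q.num := by omega
  rw [h2] at h1
  have hq : ((q : ℚ_[p])) = ((q.num : ℚ_[p])) * h := by
    rw [Rat.cast_def, hhdef]
    field_simp
    rw [hbdef]
  rw [hq, h1, ← hRP, hReval]
  congr 1
  have hiq : ι (((q.num : ℚ_[p])) * h) = ((q.num : K)) * ((b : K))⁻¹ := by
    rw [hhdef, map_mul, map_inv₀, map_intCast, map_natCast]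
  rw [hiq]
  have hkK : ((k0 : ℕ) : K) = ((q.num - c : ℤ) : K) := by
    rw [← hk0]; push_cast; ring
  rw [hkK]
  field_simp
  exact Int.cast_sub _ _

lemma dense_rat {p : ℕ} [Fact p.Prime] : DenseRange (fun q : ℚ => ((q : ℚ_[p]))) := by
  rw [Metric.denseRange_iff]
  intro x ε hε
  obtain ⟨r, hr⟩ := Padic.rat_dense p x hε
  exact ⟨r, by rwa [dist_eq_norm]⟩


theorem stmt11 {p : ℕ} [Fact p.Prime] {K : Type*} [NormedField K]
    (ι : ℚ_[p] →+* K) (hι : Continuous ι)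
    (f : ℚ_[p] → K) (hf : Continuous f) (n : ℕ) :
    (∀ x h : ℚ_[p], (dd h)^[n + 1] f x = 0) ↔
      ∃ a : Fin (n + 1) → K, ∀ x : ℚ_[p], f x = ∑ i : Fin (n + 1), a i * (ι x) ^ (i : ℕ) := by
  have hdd : @dd ℚ_[p] K _ _ = fwdDiff := rfl
  constructor
  · intro H
    have H' : ∀ x h : ℚ_[p], (fwdDiff h)^[n + 1] f x = 0 := by rw [← hdd]; exact H
    obtain ⟨P, hPdeg, hP⟩ := forward_poly ι f n H'
    have hfP : f = fun x => P.eval (ι x) := by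
      apply DenseRange.equalizer dense_rat hf ((P.continuous).comp hι)
      funext q
      exact hP q
    refine ⟨fun i => P.coeff i, ?_⟩
    intro x
    have hnd : P.natDegree < n + 1 := by
      by_cases h0 : P = 0
      · simp [h0]
      · exact (Polynomial.natDegree_lt_iff_degree_lt h0).mpr hPdeg
    rw [congrFun hfP x, Polynomial.eval_eq_sum_range' hnd,
      Fin.sum_univ_eq_sum_range (fun i => P.coeff i * (ι x) ^ i) (n + 1)]
  · rintro ⟨a, ha⟩ x h
    set P0 : K[X] := ∑ i : Fin (n + 1), Polynomial.C (a i) * Polynomial.X ^ (i : ℕ) with hP0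
    have hfeq : f = fun x => P0.eval (ι x) := by
      funext y
      rw [ha y, hP0, Polynomial.eval_finset_sum]
      simp
    have hdeg : P0.degree < ((n + 1 : ℕ) : WithBot ℕ) := by
      rw [hP0]
      refine lt_of_le_of_lt (Polynomial.degree_sum_le _ _) ?_
      rw [Finset.sup_lt_iff (by exact_mod_cast WithBot.bot_lt_coe (n + 1))]
      intro i _
      refine lt_of_le_of_lt (Polynomial.degree_C_mul_X_pow_le _ _) ?_
      rw [Nat.cast_withBot, Nat.cast_withBot]
      exact_mod_cast i.isLt
    have hz := congrFun (aux_rev ι (n + 1) P0 hdeg h) x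
    rw [hdd, hfeq]
    exact hz
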